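/- The center of a right-angled Artin group G(A) on a finite graph A is the free abelian subgroup generated by the set of central vertices of A, i.e., the vertices adjacent to every other vertex of A. -/

import Mathlib

open scoped commutatorElement

/-- The defining relations of the right-angled Artin group of a simple graph. -/
def raagRels {V : Type} (A : SimpleGraph V) : Set (FreeGroup V) :=
  {r | ∃ u v : V, A.Adj u v ∧ r = ⁅FreeGroup.of u, FreeGroup.of v⁆}

/-- The right-angled Artin group of a simple graph. -/
def Raag {V : Type} (A : SimpleGraph V) : Type := PresentedGroup (raagRels A)

instance {V : Type} (A : SimpleGraph V) : Group (Raag A) :=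
  inferInstanceAs (Group (PresentedGroup (raagRels A)))

def Raag.of {V : Type} {A : SimpleGraph V} (v : V) : Raag A := PresentedGroup.of v

/-- A vertex is central if it is adjacent to every other vertex. -/
def IsCentralVertex {V : Type} (A : SimpleGraph V) (v : V) : Prop :=
  ∀ w : V, w ≠ v → A.Adj v w

open HNNExtension HNNExtension.NormalWord

namespace HNNCenter

variable {H : Type*} [Group H] {K : Subgroup H}

theorem center_sub_range (hK : K ≠ ⊤)
    {g : HNNExtension H K K (MulEquiv.refl K)}
    (hg : ∀ x, g * x = x * g) :
    ∃ h : H, HNNExtension.of h = g := by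
  classical
  obtain ⟨d⟩ := HNNExtension.NormalWord.TransversalPair.nonempty H K K
  set w : HNNExtension.NormalWord d := g • HNNExtension.NormalWord.empty with hwdef
  have hw : w.prod (MulEquiv.refl K) = g := by
    rw [hwdef, HNNExtension.NormalWord.prod_smul, HNNExtension.NormalWord.prod_empty, mul_one]
  by_cases hL : w.toList = []
  · refine ⟨w.head, ?_⟩
    rw [← hw]
    simp [ReducedWord.prod, hL]
  · exfalso
    apply hK
    rw [Subgroup.eq_top_iff']
    intro z
    have key : ∀ x : H, w.head⁻¹ * (x * w.head) ∈ K := by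
      intro x
      set L : List (ℤˣ × H) := w.toList with hLdef
      set n : ℤˣ × H := L.getLast hL with hndef
      have hsplit : L.dropLast ++ [n] = L := L.dropLast_append_getLast hL
      have hchain : L.IsChain (fun a b => a.2 ∈ toSubgroup K K a.1 → a.1 = b.1) := w.chain
      have hchain0 := hchain
      rw [← hsplit, List.isChain_append] at hchain0
      obtain ⟨hc1, -, hc3⟩ := hchain0
      have hchain' : (L.dropLast ++ [(n.1, n.2 * x)]).IsChain
          (fun a b => a.2 ∈ toSubgroup K K a.1 → a.1 = b.1) := by
        rw [List.isChain_append]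
        refine ⟨hc1, List.isChain_singleton _, ?_⟩
        intro p hp q hq h2
        simp only [List.head?_cons, Option.mem_def, Option.some.injEq] at hq
        subst hq
        exact hc3 p hp n (by simp) h2
      set w₁ : HNNExtension.NormalWord.ReducedWord H K K :=
        ⟨w.head, L.dropLast ++ [(n.1, n.2 * x)], hchain'⟩ with hw₁def
      set w₂ : HNNExtension.NormalWord.ReducedWord H K K := ⟨x * w.head, L, w.chain⟩ with hw₂def
      have hlist : ((L.dropLast ++ [(n.1, n.2 * x)]).map
            (fun p => (t ^ (p.1 : ℤ) * HNNExtension.of p.2 : HNNExtension H K K (MulEquiv.refl K)))).prod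
          = ((L.dropLast ++ [n]).map
            (fun p => (t ^ (p.1 : ℤ) * HNNExtension.of p.2 : HNNExtension H K K (MulEquiv.refl K)))).prod * HNNExtension.of x := by
        simp [List.map_append, List.prod_append, map_mul, mul_assoc]
      have hprod₁ : w₁.prod (MulEquiv.refl K) = g * HNNExtension.of x := by
        show HNNExtension.of w.head * _ = _
        rw [hlist, hsplit, ← mul_assoc]
        rw [← hw]
        rfl
      have hprod₂ : w₂.prod (MulEquiv.refl K) = g * HNNExtension.of x := by
        rw [hg]
        show HNNExtension.of (x * w.head) * _ = _
        rw [← hw]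
        show _ = HNNExtension.of x * (HNNExtension.of w.head * _)
        rw [map_mul, mul_assoc]
      have hfst := HNNExtension.ReducedWord.map_fst_eq_and_of_prod_eq (MulEquiv.refl K)
        (hprod₁.trans hprod₂.symm)
      obtain ⟨-, hmem⟩ := hfst
      have hne : (L.dropLast ++ [(n.1, n.2 * x)]) ≠ [] := by simp
      have hu := hmem ((L.dropLast ++ [(n.1, n.2 * x)]).head hne).1 (by
        show _ ∈ (w₁.toList.head?).map Prod.fst
        rw [hw₁def]
        show _ ∈ ((L.dropLast ++ [(n.1, n.2 * x)]).head?).map Prod.fst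
        rw [List.head?_eq_head hne]
        simp)
      have hKK : w.head⁻¹ * (x * w.head) ∈
          toSubgroup K K (-((L.dropLast ++ [(n.1, n.2 * x)]).head hne).1) := hu
      rcases Int.units_eq_one_or ((L.dropLast ++ [(n.1, n.2 * x)]).head hne).1 with h1 | h1 <;>
        rw [h1] at hKK <;> simpa using hKK
    have := key (w.head * z * w.head⁻¹)
    simpa [mul_assoc] using this

end HNNCenter

namespace RaagAux
open scoped Classical
open scoped IsMulCommutative

variable {V : Type} {A : SimpleGraph V}

theorem commute_of_adj {u w : V} (h : A.Adj u w) :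
    Commute (Raag.of u : Raag A) (Raag.of w) := by
  rw [← commutatorElement_eq_one_iff_commute]
  have hr : (⁅FreeGroup.of u, FreeGroup.of w⁆ : FreeGroup V) ∈ raagRels A := ⟨u, w, h, rfl⟩
  have : (PresentedGroup.mk (raagRels A)) ⁅FreeGroup.of u, FreeGroup.of w⁆ = 1 := by
    apply (QuotientGroup.eq_one_iff _).2
    exact Subgroup.subset_normalClosure hr
  rw [map_commutatorElement] at this
  exact this

/-- Lifting a vertex map to a hom out of the RAAG. -/
def lift {G : Type*} [Group G] (A : SimpleGraph V) (f : V → G)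
    (hf : ∀ u w, A.Adj u w → Commute (f u) (f w)) : Raag A →* G :=
  PresentedGroup.toGroup (f := f) <| by
    rintro r ⟨u, w, h, rfl⟩
    rw [map_commutatorElement, commutatorElement_eq_one_iff_commute]
    simp only [FreeGroup.lift_apply_of]
    exact hf u w h

@[simp] theorem lift_of {G : Type*} [Group G] (A : SimpleGraph V) (f : V → G)
    (hf : ∀ u w, A.Adj u w → Commute (f u) (f w)) (v : V) :
    lift A f hf (Raag.of v) = f v :=
  PresentedGroup.toGroup.of _

theorem hom_ext {G : Type*} [Group G] {φ ψ : Raag A →* G}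
    (h : ∀ v : V, φ (Raag.of v) = ψ (Raag.of v)) : φ = ψ :=
  PresentedGroup.ext h

theorem closure_range_of :
    Subgroup.closure (Set.range (Raag.of : V → Raag A)) = ⊤ :=
  PresentedGroup.closure_range_of (raagRels A)

theorem of_mem_center {v : V} (hv : IsCentralVertex A v) :
    (Raag.of v : Raag A) ∈ Subgroup.center (Raag A) := by
  rw [Subgroup.mem_center_iff]
  intro g
  have hle : Subgroup.closure (Set.range (Raag.of : V → Raag A)) ≤
      Subgroup.centralizer {(Raag.of v : Raag A)} := by
    rw [Subgroup.closure_le]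
    rintro x ⟨w, rfl⟩
    rw [SetLike.mem_coe, Subgroup.mem_centralizer_iff]
    rintro y ⟨rfl⟩
    by_cases hwv : w = v
    · subst hwv; rfl
    · exact (commute_of_adj (hv w hwv)).eq
  have : g ∈ Subgroup.centralizer {(Raag.of v : Raag A)} := by
    apply hle
    rw [closure_range_of]; trivial
  exact (Subgroup.mem_centralizer_iff.1 this _ rfl).symm

section Decomp

variable (A) (v : V)

/-- The induced subgraph on the complement of `v`. -/
def delete : SimpleGraph {w : V // w ≠ v} := SimpleGraph.comap Subtype.val A

/-- The inclusion of the RAAG of the deleted graph. -/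
def incl : Raag (delete A v) →* Raag A :=
  lift _ (fun w => Raag.of w.1) (fun u w h => commute_of_adj h)

@[simp] theorem incl_of (w : {w : V // w ≠ v}) :
    incl A v (Raag.of w) = Raag.of w.1 := lift_of _ _ _ _

/-- The subgroup of the deleted RAAG generated by the link of `v`. -/
def linkSub : Subgroup (Raag (delete A v)) :=
  Subgroup.closure ((fun w => (Raag.of w : Raag (delete A v))) ''
    {w : {w : V // w ≠ v} | A.Adj v w.1})

theorem commute_of_v_incl_linkSub (x : Raag (delete A v)) (hx : x ∈ linkSub A v) :
    Commute (Raag.of v : Raag A) (incl A v x) := by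
  induction hx using Subgroup.closure_induction with
  | mem y hy =>
    obtain ⟨w, hw, rfl⟩ := hy
    rw [incl_of]
    exact commute_of_adj hw
  | one => simp [Commute.one_right]
  | mul a b _ _ ha hb => rw [map_mul]; exact ha.mul_right hb
  | inv a _ ha => rw [map_inv]; exact ha.inv_right

/-- The HNN extension we will identify `Raag A` with. -/
abbrev HNN := HNNExtension (Raag (delete A v)) (linkSub A v) (linkSub A v)
  (MulEquiv.refl (linkSub A v))

/-- The map from `Raag A` to the HNN extension. -/
noncomputable def toHNN : Raag A →* HNN A v :=
  lift A (fun w => if h : w = v then HNNExtension.t else HNNExtension.of (Raag.of ⟨w, h⟩))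
    (by
      have tcomm : ∀ w (hadj : A.Adj v w) (hwv : w ≠ v),
          Commute (HNNExtension.t : HNN A v) (HNNExtension.of (Raag.of ⟨w, hwv⟩)) := by
        intro w hadj hwv
        have ht := HNNExtension.t_mul_of (φ := MulEquiv.refl (linkSub A v))
          (⟨Raag.of ⟨w, hwv⟩, Subgroup.subset_closure ⟨⟨w, hwv⟩, hadj, rfl⟩⟩ : linkSub A v)
        unfold Commute SemiconjBy
        rw [ht]; rfl
      intro u w h
      have hne : u ≠ w := h.ne
      by_cases hu : u = v
      · have hwv : w ≠ v := fun hwv => hne (hu.trans hwv.symm)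
        rw [dif_pos hu, dif_neg hwv]
        exact tcomm w (hu ▸ h) hwv
      · by_cases hwv : w = v
        · rw [dif_neg hu, dif_pos hwv]
          exact (tcomm u (hwv ▸ h.symm) hu).symm
        · rw [dif_neg hu, dif_neg hwv]
          have : (delete A v).Adj ⟨u, hu⟩ ⟨w, hwv⟩ := h
          exact (commute_of_adj this).map HNNExtension.of)

@[simp] theorem toHNN_of_v : toHNN A v (Raag.of v) = HNNExtension.t := by
  rw [toHNN, lift_of, dif_pos rfl]

theorem toHNN_of_ne (w : V) (h : w ≠ v) :
    toHNN A v (Raag.of w) = HNNExtension.of (Raag.of ⟨w, h⟩) := by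
  rw [toHNN, lift_of, dif_neg h]

/-- The map back. -/
noncomputable def fromHNN : HNN A v →* Raag A :=
  HNNExtension.lift (incl A v) (Raag.of v) (by
    intro a
    exact (commute_of_v_incl_linkSub A v a.1 a.2).eq)

@[simp] theorem fromHNN_t : fromHNN A v HNNExtension.t = Raag.of v :=
  HNNExtension.lift_t _ _ _

@[simp] theorem fromHNN_of (x : Raag (delete A v)) :
    fromHNN A v (HNNExtension.of x) = incl A v x :=
  HNNExtension.lift_of _ _ _ _

/-- `Raag A` is isomorphic to the HNN extension. -/
noncomputable def hnnEquiv : Raag A ≃* HNN A v :=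
  MonoidHom.toMulEquiv (toHNN A v) (fromHNN A v)
    (by
      apply hom_ext
      intro w
      simp only [MonoidHom.comp_apply, MonoidHom.id_apply]
      by_cases h : w = v
      · subst h; rw [toHNN_of_v]; simp
      · rw [toHNN_of_ne A v w h]; simp)
    (by
      apply HNNExtension.hom_ext
      · apply hom_ext
        intro w
        simp only [MonoidHom.comp_apply, MonoidHom.id_apply]
        rw [fromHNN_of, incl_of, toHNN_of_ne A v w.1 w.2]
      · simp)

@[simp] theorem hnnEquiv_symm_of (x : Raag (delete A v)) :
    (hnnEquiv A v).symm (HNNExtension.of x) = incl A v x := fromHNN_of A v x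

theorem linkSub_ne_top {w₀ : V} (hw₀v : w₀ ≠ v) (hw₀ : ¬ A.Adj v w₀) :
    linkSub A v ≠ ⊤ := by
  intro htop
  have hmem : (Raag.of ⟨w₀, hw₀v⟩ : Raag (delete A v)) ∈ linkSub A v := htop ▸ trivial
  -- the exponent-sum-at-w₀ homomorphism
  set χ : Raag (delete A v) →* Multiplicative ℤ :=
    lift _ (fun w => Multiplicative.ofAdd (if w.1 = w₀ then 1 else 0))
      (fun _ _ _ => Commute.all _ _) with hχ
  have hker : ∀ x ∈ linkSub A v, χ x = 1 := by
    intro x hx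
    induction hx using Subgroup.closure_induction with
    | mem y hy =>
      obtain ⟨w, hw, rfl⟩ := hy
      have : w.1 ≠ w₀ := fun h => hw₀ (h ▸ hw)
      rw [hχ, lift_of, if_neg this]; rfl
    | one => simp
    | mul a b _ _ ha hb => rw [map_mul, ha, hb, mul_one]
    | inv a _ ha => rw [map_inv, ha, inv_one]
  have h1 := hker _ hmem
  rw [hχ, lift_of, if_pos rfl] at h1
  simpa using h1

end Decomp


section Central

open Subgroup

variable (A : SimpleGraph V)

/-- The generator `Raag.of u` for a central vertex `u`, as an element of the center. -/
noncomputable def zc (u : {v : V // IsCentralVertex A v}) : Subgroup.center (Raag A) :=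
  ⟨Raag.of u.1, of_mem_center u.2⟩

variable [Fintype V]

/-- The canonical central element with exponent vector `f`. -/
noncomputable def centralElt (f : {v : V // IsCentralVertex A v} → ℤ) :
    Subgroup.center (Raag A) :=
  ∏ u, zc A u ^ f u

theorem centralElt_add (f g : {v : V // IsCentralVertex A v} → ℤ) :
    centralElt A (f + g) = centralElt A f * centralElt A g := by
  rw [centralElt, centralElt, centralElt, ← Finset.prod_mul_distrib]
  refine Finset.prod_congr rfl fun u _ => ?_
  rw [Pi.add_apply, zpow_add]

theorem centralElt_zero : centralElt A 0 = 1 := by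
  rw [centralElt]
  simp

theorem centralElt_neg (f : {v : V // IsCentralVertex A v} → ℤ) :
    centralElt A (-f) = (centralElt A f)⁻¹ := by
  rw [eq_inv_iff_mul_eq_one, ← centralElt_add]
  simp [centralElt_zero]

theorem centralElt_single (u : {v : V // IsCentralVertex A v}) :
    centralElt A (fun u' => if u' = u then 1 else 0) = zc A u := by
  rw [centralElt]
  have : ∀ u' : {v : V // IsCentralVertex A v},
      zc A u' ^ (if u' = u then (1:ℤ) else 0) = if u' = u then zc A u' else 1 := by
    intro u'; split_ifs <;> simp
  rw [Finset.prod_congr rfl (fun u' _ => this u')]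
  rw [Finset.prod_ite_eq' Finset.univ u (fun u' => zc A u')]
  simp

theorem exists_rep_of_complete (hcomp : ∀ u : V, IsCentralVertex A u) (g : Raag A) :
    ∃ f, g = ↑(centralElt A f) := by
  set T : Subgroup (Raag A) :=
    { carrier := {x | ∃ f, x = ↑(centralElt A f)}
      one_mem' := ⟨0, by rw [centralElt_zero]; rfl⟩
      mul_mem' := by
        rintro a b ⟨f, rfl⟩ ⟨f', rfl⟩
        exact ⟨f + f', by rw [centralElt_add]; rfl⟩
      inv_mem' := by
        rintro a ⟨f, rfl⟩
        exact ⟨-f, by rw [centralElt_neg]; rfl⟩ } with hT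
  have hle : Subgroup.closure (Set.range (Raag.of : V → Raag A)) ≤ T := by
    rw [Subgroup.closure_le]
    rintro x ⟨w, rfl⟩
    exact ⟨(fun u' => if u' = ⟨w, hcomp w⟩ then 1 else 0), by
      rw [centralElt_single A ⟨w, hcomp w⟩]; rfl⟩
  have : g ∈ T := hle (by rw [closure_range_of]; trivial)
  exact this

end Central

section MainInduction

open Subgroup

/-- Main induction: every central element is a `centralElt`. -/
theorem exists_rep_of_mem_center : ∀ (n : ℕ) (V : Type) [Fintype V] (A : SimpleGraph V),
    Fintype.card V ≤ n → ∀ g : Raag A, g ∈ Subgroup.center (Raag A) →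
    ∃ f, g = ↑(centralElt A f) := by
  intro n
  induction n with
  | zero =>
    intro V _ A hcard g _
    have : IsEmpty V := by
      rw [← Fintype.card_eq_zero_iff]
      omega
    exact exists_rep_of_complete A (fun u => (this.false u).elim) g
  | succ n ih =>
    intro V _ A hcard g hg
    by_cases hcomp : ∀ u : V, IsCentralVertex A u
    · exact exists_rep_of_complete A hcomp g
    · push_neg at hcomp
      obtain ⟨v, hv⟩ := hcomp
      rw [IsCentralVertex] at hv
      push_neg at hv
      obtain ⟨w₀, hw₀v, hw₀⟩ := hv
      set e := hnnEquiv A v with he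
      have hgc : ∀ b : Raag A, b * g = g * b := fun b => Subgroup.mem_center_iff.1 hg b
      have hcent' : ∀ x, e g * x = x * e g := by
        intro x
        have hx : g * e.symm x = e.symm x * g := (hgc (e.symm x)).symm
        calc e g * x = e g * e (e.symm x) := by rw [MulEquiv.apply_symm_apply]
        _ = e (g * e.symm x) := by rw [map_mul]
        _ = e (e.symm x * g) := by rw [hx]
        _ = x * e g := by rw [map_mul, MulEquiv.apply_symm_apply]
      obtain ⟨h, hh⟩ := HNNCenter.center_sub_range (linkSub_ne_top A v hw₀v hw₀) hcent'
      have hhc : h ∈ Subgroup.center (Raag (delete A v)) := by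
        rw [Subgroup.mem_center_iff]
        intro y
        apply HNNExtension.of_injective (φ := MulEquiv.refl (linkSub A v))
        rw [map_mul, map_mul, hh]
        exact (hcent' (HNNExtension.of y)).symm
      have hcardlt : Fintype.card {w : V // w ≠ v} < Fintype.card V :=
        Fintype.card_subtype_lt (x := v) (by simp)
      obtain ⟨f, hf⟩ := ih {w : V // w ≠ v} (delete A v) (by omega) h hhc
      have hg_incl : g = incl A v h := by
        have h2 : e.symm (e g) = e.symm (HNNExtension.of h) := by rw [hh]
        rw [MulEquiv.symm_apply_apply] at h2
        rw [h2, he]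
        exact hnnEquiv_symm_of A v h
      -- exponents of vertices not adjacent to v vanish
      have claim : ∀ u' : {w : {w : V // w ≠ v} // IsCentralVertex (delete A v) w},
          ¬ A.Adj v u'.1.1 → f u' = 0 := by
        intro u' hadj
        set ψ : Raag A →* Equiv.Perm ℤ :=
          lift A (fun w => if w = u'.1.1 then Equiv.addRight (1:ℤ)
            else if w = v then Equiv.neg ℤ else 1) (by
            intro x y hxy
            by_cases hx1 : x = u'.1.1
            · have hy1 : y ≠ u'.1.1 := fun hy => hxy.ne (hx1.trans hy.symm)
              have hy2 : y ≠ v := by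
                rintro rfl
                exact hadj (hx1 ▸ hxy.symm)
              rw [if_neg hy1, if_neg hy2]
              exact Commute.one_right _
            · by_cases hx2 : x = v
              · have hy1 : y ≠ u'.1.1 := by
                  rintro rfl
                  exact hadj (hx2 ▸ hxy)
                have hy2 : y ≠ v := fun hy => hxy.ne (hx2.trans hy.symm)
                rw [if_neg hy1, if_neg hy2]
                exact Commute.one_right _
              · rw [if_neg hx1, if_neg hx2]
                exact Commute.one_left _) with hψ
        set Θ : Subgroup.center (Raag (delete A v)) →* Equiv.Perm ℤ :=
          ψ.comp ((incl A v).comp (Subgroup.center (Raag (delete A v))).subtype) with hΘ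
        have hΘker : Θ (∏ u'' ∈ Finset.univ.erase u',
            zc (delete A v) u'' ^ f u'') = 1 := by
          rw [← MonoidHom.mem_ker]
          apply Subgroup.prod_mem
          intro u'' hu''
          apply Subgroup.zpow_mem
          rw [MonoidHom.mem_ker, hΘ]
          simp only [MonoidHom.comp_apply]
          have hz : ((Subgroup.center (Raag (delete A v))).subtype) (zc (delete A v) u'')
              = Raag.of u''.1 := rfl
          rw [hz, incl_of, hψ, lift_of]
          have h1 : u''.1.1 ≠ u'.1.1 := by
            have hne'' : u'' ≠ u' := Finset.ne_of_mem_erase hu''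
            intro hval
            exact hne'' (Subtype.ext (Subtype.ext hval))
          rw [if_neg h1, if_neg u''.1.2]
        have hψg : ψ g = Equiv.addRight (f u' • (1:ℤ)) := by
          rw [hg_incl, hf, centralElt]
          rw [← Finset.mul_prod_erase Finset.univ
            (fun u'' => zc (delete A v) u'' ^ f u'') (Finset.mem_univ u')]
          have hcoe : (↑(zc (delete A v) u' ^ f u' * ∏ u'' ∈ Finset.univ.erase u',
                zc (delete A v) u'' ^ f u'') : Raag (delete A v))
              = (Raag.of u'.1 : Raag (delete A v)) ^ f u' *
                ↑(∏ u'' ∈ Finset.univ.erase u', zc (delete A v) u'' ^ f u'') := by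
            rw [Subgroup.coe_mul, SubgroupClass.coe_zpow]
            rfl
          rw [hcoe, map_mul, map_mul, map_zpow, map_zpow, incl_of]
          have hΘker' : ψ ((incl A v) ↑(∏ u'' ∈ Finset.univ.erase u',
              zc (delete A v) u'' ^ f u'')) = 1 := hΘker
          rw [hΘker', mul_one, hψ, lift_of, if_pos rfl]
          simp
        have hvg := congrArg ψ (hgc (Raag.of v))
        rw [map_mul, map_mul, hψg, hψ, lift_of] at hvg
        have hvne : v ≠ u'.1.1 := fun hv' => u'.1.2 hv'.symm
        rw [if_neg hvne, if_pos rfl] at hvg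
        have h0 := congrArg (fun σ : Equiv.Perm ℤ => σ 0) hvg
        simp [Equiv.Perm.mul_apply] at h0
        omega
      -- embed the central vertices of A into those of the deleted graph
      have hvnc : ¬ IsCentralVertex A v := fun hc => hw₀ (hc w₀ hw₀v)
      set emb : {u : V // IsCentralVertex A u} →
          {w : {w : V // w ≠ v} // IsCentralVertex (delete A v) w} :=
        fun u => ⟨⟨u.1, fun hu => hvnc (hu ▸ u.2)⟩, by
          intro w' hw'
          have hne' : w'.1 ≠ u.1 := fun hval => hw' (Subtype.ext hval)
          exact u.2 w'.1 hne'⟩ with hemb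
      have hembinj : Function.Injective emb := by
        intro a b hab
        exact Subtype.ext (congrArg (fun x => x.1.1) hab)
      have hvanish : ∀ u', u' ∉ Finset.univ.image emb → f u' = 0 := by
        intro u' hu'
        apply claim
        intro hadj
        apply hu'
        have hcent : IsCentralVertex A u'.1.1 := by
          intro w hw
          by_cases hwv2 : w = v
          · subst hwv2; exact hadj.symm
          · exact u'.2 ⟨w, hwv2⟩ (fun hval => hw (congrArg Subtype.val hval))
        rw [Finset.mem_image]
        exact ⟨⟨u'.1.1, hcent⟩, Finset.mem_univ _, by
          apply Subtype.ext; apply Subtype.ext; rfl⟩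
      have hprodimg : centralElt (delete A v) f =
          ∏ u : {u : V // IsCentralVertex A u}, zc (delete A v) (emb u) ^ f (emb u) := by
        rw [centralElt]
        rw [← Finset.prod_image (g := emb)
          (f := fun u'' => zc (delete A v) u'' ^ f u'')
          (fun a _ b _ hab => hembinj hab)]
        exact (Finset.prod_subset (Finset.subset_univ _) (fun x _ hx => by
          rw [hvanish x hx, zpow_zero])).symm
      set T' : Subgroup (Subgroup.center (Raag (delete A v))) :=
        Subgroup.closure (Set.range (fun u : {u : V // IsCentralVertex A u} =>
          zc (delete A v) (emb u))) with hT'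
      have hcod : ∀ x : Subgroup.center (Raag (delete A v)), x ∈ T' →
          incl A v ↑x ∈ Subgroup.center (Raag A) := by
        intro x hx
        induction hx using Subgroup.closure_induction with
        | mem y hy =>
          obtain ⟨u, rfl⟩ := hy
          rw [show ((zc (delete A v) (emb u) : Subgroup.center (Raag (delete A v))) :
            Raag (delete A v)) = Raag.of (emb u).1 from rfl, incl_of]
          exact of_mem_center u.2
        | one => rw [Subgroup.coe_one, map_one]; exact Subgroup.one_mem _
        | mul a b _ _ ha hb => rw [Subgroup.coe_mul, map_mul]; exact Subgroup.mul_mem _ ha hb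
        | inv a _ ha => rw [Subgroup.coe_inv, map_inv]; exact Subgroup.inv_mem _ ha
      set Θ' : T' →* Subgroup.center (Raag A) :=
        MonoidHom.codRestrict (((incl A v).comp
          (Subgroup.center (Raag (delete A v))).subtype).comp T'.subtype) _
          (fun x => hcod x.1 x.2) with hΘ'
      set P : T' := ∏ u : {u : V // IsCentralVertex A u},
        (⟨zc (delete A v) (emb u), Subgroup.subset_closure ⟨u, rfl⟩⟩ : T') ^ f (emb u) with hP
      refine ⟨fun u => f (emb u), ?_⟩
      have hPsub : (T'.subtype P : Subgroup.center (Raag (delete A v)))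
          = centralElt (delete A v) f := by
        rw [hP, map_prod, hprodimg]
        refine Finset.prod_congr rfl fun u _ => ?_
        rw [map_zpow]
        rfl
      have hΘ'P : Θ' P = centralElt A (fun u => f (emb u)) := by
        rw [hP, map_prod, centralElt]
        refine Finset.prod_congr rfl fun u _ => ?_
        rw [map_zpow]
        congr 1
      rw [hg_incl, hf, ← hPsub, ← hΘ'P]
      rfl

end MainInduction

section Final

variable (A : SimpleGraph V) [Fintype V]

theorem centralElt_mem_closure (f : {v : V // IsCentralVertex A v} → ℤ) :
    (↑(centralElt A f) : Raag A) ∈ Subgroup.closure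
      ((fun v : V => (Raag.of v : Raag A)) '' {v : V | IsCentralVertex A v}) := by
  have hmem : centralElt A f ∈ Subgroup.comap (Subgroup.center (Raag A)).subtype
      (Subgroup.closure ((fun v : V => (Raag.of v : Raag A)) ''
        {v : V | IsCentralVertex A v})) := by
    rw [centralElt]
    apply Subgroup.prod_mem
    intro u _
    apply Subgroup.zpow_mem
    rw [Subgroup.mem_comap]
    exact Subgroup.subset_closure ⟨u.1, u.2, rfl⟩
  exact hmem

theorem center_eq_closure :
    Subgroup.center (Raag A) = Subgroup.closure
      ((fun v : V => (Raag.of v : Raag A)) '' {v : V | IsCentralVertex A v}) := by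
  apply le_antisymm
  · intro g hg
    obtain ⟨f, hf⟩ := exists_rep_of_mem_center (Fintype.card V) V A le_rfl g hg
    rw [hf]
    exact centralElt_mem_closure A f
  · rw [Subgroup.closure_le]
    rintro x ⟨u, hu, rfl⟩
    exact of_mem_center hu

/-- The homomorphism from the free abelian group to the center. -/
noncomputable def alpha : Multiplicative ({v : V // IsCentralVertex A v} → ℤ) →*
    Subgroup.center (Raag A) :=
  MonoidHom.mk' (fun F => centralElt A (Multiplicative.toAdd F)) (by
    intro a b
    show centralElt A (Multiplicative.toAdd a + Multiplicative.toAdd b) = _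
    rw [centralElt_add])

/-- The retraction recording exponent sums at central vertices. -/
noncomputable def piHom : Raag A →* Multiplicative ({v : V // IsCentralVertex A v} → ℤ) :=
  lift A (fun w => Multiplicative.ofAdd (fun c => if c.1 = w then 1 else 0))
    (fun _ _ _ => Commute.all _ _)

theorem piHom_centralElt (f : {v : V // IsCentralVertex A v} → ℤ) :
    piHom A ↑(centralElt A f) = Multiplicative.ofAdd f := by
  have h0 : piHom A ↑(centralElt A f)
      = ((piHom A).comp (Subgroup.center (Raag A)).subtype) (centralElt A f) := rfl
  rw [h0, centralElt, map_prod]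
  have hterm : ∀ u : {v : V // IsCentralVertex A v},
      ((piHom A).comp (Subgroup.center (Raag A)).subtype) (zc A u ^ f u)
      = Multiplicative.ofAdd (fun c => if c = u then f u else 0) := by
    intro u
    rw [map_zpow]
    have h1 : ((piHom A).comp (Subgroup.center (Raag A)).subtype) (zc A u)
        = Multiplicative.ofAdd (fun c : {v : V // IsCentralVertex A v} =>
            if c.1 = u.1 then (1:ℤ) else 0) := by
      show piHom A (Raag.of u.1) = _
      rw [piHom, lift_of]
    rw [h1, ← ofAdd_zsmul]
    congr 1
    funext c
    simp only [Pi.smul_apply, smul_eq_mul]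
    by_cases hc : c = u
    · rw [if_pos (by rw [hc]), if_pos hc, mul_one]
    · rw [if_neg (fun h => hc (Subtype.ext h)), if_neg hc, mul_zero]
  rw [Finset.prod_congr rfl (fun u _ => hterm u), ← ofAdd_sum]
  congr 1
  funext c
  simp [Finset.sum_ite_eq]

theorem alpha_leftInv (a : Multiplicative ({v : V // IsCentralVertex A v} → ℤ)) :
    piHom A ↑(alpha A a) = a :=
  piHom_centralElt A (Multiplicative.toAdd a)

theorem alpha_bijective : Function.Bijective (alpha A) := by
  constructor
  · intro a b hab
    rw [← alpha_leftInv A a, ← alpha_leftInv A b, hab]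
  · intro g
    obtain ⟨f, hf⟩ := exists_rep_of_mem_center (Fintype.card V) V A le_rfl g.1 g.2
    exact ⟨Multiplicative.ofAdd f, Subtype.ext hf.symm⟩

end Final

end RaagAux

/-- The center of a RAAG on a finite graph is the subgroup generated by the central
vertices, and it is free abelian of rank the number of central vertices. -/
theorem stmt13 {V : Type} [Fintype V] (A : SimpleGraph V) :
    Subgroup.center (Raag A) =
        Subgroup.closure ((fun v : V => (Raag.of v : Raag A)) ''
          {v : V | IsCentralVertex A v}) ∧
      Nonempty ((Subgroup.center (Raag A)) ≃*
        Multiplicative ({v : V // IsCentralVertex A v} → ℤ)) := by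
  exact ⟨RaagAux.center_eq_closure A,
    ⟨(MulEquiv.ofBijective (RaagAux.alpha A) (RaagAux.alpha_bijective A)).symm⟩⟩
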